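/- Let A ∈ ℝ^{n×d} with rank(A) ≥ k and σ_k(A) > σ_{k+1}(A), and let S be any matrix with n columns such that ‖A^T S^T S A − A^T A‖₂ ≤ ε·σ₁(A)² for some ε < gap_k(A). Then SA has rank at least k and d₂(V_{SA,k}, V_{A,k}) ≤ ε / (gap_k(A) − ε). -/

import Mathlib

open Matrix MeasureTheory

noncomputable section

/-- Euclidean norm of a vector in `ℝ^n`. -/
def vnorm {n : ℕ} (v : Fin n → ℝ) : ℝ := Real.sqrt (∑ i, v i ^ 2)

/-- Spectral norm of a matrix (operator norm as a map between Euclidean spaces). -/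
def spec {m n : ℕ} (M : Matrix (Fin m) (Fin n) ℝ) : ℝ :=
  ‖LinearMap.toContinuousLinearMap (Matrix.toEuclideanLin M)‖

/-- The four Moore-Penrose conditions. -/
def IsMP {m n : ℕ} (X : Matrix (Fin m) (Fin n) ℝ) (Y : Matrix (Fin n) (Fin m) ℝ) : Prop :=
  X * Y * X = X ∧ Y * X * Y = Y ∧ (X * Y)ᵀ = X * Y ∧ (Y * X)ᵀ = Y * X

/-- The Moore-Penrose pseudoinverse (it always exists and is unique, so this choice-based
definition picks out exactly the Moore-Penrose pseudoinverse). -/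
def pinv {m n : ℕ} (X : Matrix (Fin m) (Fin n) ℝ) : Matrix (Fin n) (Fin m) ℝ := by
  classical exact if h : ∃ Y, IsMP X Y then h.choose else 0

/-- Orthogonal projection onto the column space of a matrix: `P_X = X X⁺`. -/
def projCol {m n : ℕ} (X : Matrix (Fin m) (Fin n) ℝ) : Matrix (Fin m) (Fin m) ℝ := X * pinv X

/-- Distance between column spaces: `d₂(U, W) = ‖P_U - P_W‖₂`. -/
def d2 {m p q : ℕ} (U : Matrix (Fin m) (Fin p) ℝ) (W : Matrix (Fin m) (Fin q) ℝ) : ℝ :=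
  spec (projCol U - projCol W)

/-- `(U, s, V)` is a thin SVD of `X`: orthonormal columns, nonincreasing nonnegative
singular values, and `X = U (diag s) Vᵀ`. -/
def IsThinSVD {m n p : ℕ} (X : Matrix (Fin m) (Fin n) ℝ) (U : Matrix (Fin m) (Fin p) ℝ)
    (s : Fin p → ℝ) (V : Matrix (Fin n) (Fin p) ℝ) : Prop :=
  Uᵀ * U = 1 ∧ Vᵀ * V = 1 ∧ Antitone s ∧ (∀ i, 0 ≤ s i) ∧ X = U * Matrix.diagonal s * Vᵀ

/-- The matrix of the first `k` columns. -/
def firstCols {m p : ℕ} (U : Matrix (Fin m) (Fin p) ℝ) (k : ℕ) (h : k ≤ p) :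
    Matrix (Fin m) (Fin k) ℝ := U.submatrix id (Fin.castLE h)

/-- The matrix of the remaining columns (columns `k+1, …, p` in 1-based indexing). -/
def tailCols {m p : ℕ} (U : Matrix (Fin m) (Fin p) ℝ) (k : ℕ) (h : k ≤ p) :
    Matrix (Fin m) (Fin (p - k)) ℝ :=
  U.submatrix id (fun j => ⟨k + j.1, by have := j.2; omega⟩)

/-- `sv s i` is the `i`-th singular value (1-indexed), `0` past the end. -/
def sv {p : ℕ} (s : Fin p → ℝ) (i : ℕ) : ℝ := by
  classical exact if h : i - 1 < p then s ⟨i - 1, h⟩ else 0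

end

/- ================= Auxiliary development ================= -/

noncomputable section Aux
open scoped Matrix.Norms.L2Operator

lemma spec_eq {m n : ℕ} (M : Matrix (Fin m) (Fin n) ℝ) : spec M = ‖M‖ := rfl

lemma spec_nonneg {m n : ℕ} (M : Matrix (Fin m) (Fin n) ℝ) : 0 ≤ spec M := by
  rw [spec_eq]; exact norm_nonneg M

lemma spec_mul_le {m n p : ℕ} (A : Matrix (Fin m) (Fin n) ℝ) (B : Matrix (Fin n) (Fin p) ℝ) :
    spec (A * B) ≤ spec A * spec B := by
  simpa only [spec_eq] using Matrix.l2_opNorm_mul A B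

lemma real_transpose_eq_conjTranspose {m n : ℕ} (A : Matrix (Fin m) (Fin n) ℝ) : Aᵀ = Aᴴ := by
  ext i j; simp [Matrix.conjTranspose_apply]

lemma spec_transpose {m n : ℕ} (A : Matrix (Fin m) (Fin n) ℝ) : spec Aᵀ = spec A := by
  rw [spec_eq, spec_eq, real_transpose_eq_conjTranspose]
  exact Matrix.l2_opNorm_conjTranspose A

lemma spec_sub_le {m n : ℕ} (A B : Matrix (Fin m) (Fin n) ℝ) : spec (A - B) ≤ spec A + spec B := by
  simp only [spec_eq]; exact norm_sub_le A B

lemma spec_neg {m n : ℕ} (A : Matrix (Fin m) (Fin n) ℝ) : spec (-A) = spec A := by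
  simp only [spec_eq]; exact norm_neg A

def en {n : ℕ} (x : Fin n → ℝ) : EuclideanSpace ℝ (Fin n) := (WithLp.equiv 2 _).symm x

lemma en_inner {n : ℕ} (x y : Fin n → ℝ) : (inner ℝ (en x) (en y) : ℝ) = x ⬝ᵥ y := by
  simp [en, PiLp.inner_apply, dotProduct, RCLike.inner_apply, mul_comm]

lemma en_norm_sq {n : ℕ} (x : Fin n → ℝ) : ‖en x‖ ^ 2 = x ⬝ᵥ x := by
  rw [← real_inner_self_eq_norm_sq]; exact en_inner x x

lemma spec_mulVec {m n : ℕ} (M : Matrix (Fin m) (Fin n) ℝ) (x : Fin n → ℝ) :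
    ‖en (M *ᵥ x)‖ ≤ spec M * ‖en x‖ := Matrix.l2_opNorm_mulVec M (en x)

lemma spec_le_bound {m n : ℕ} (M : Matrix (Fin m) (Fin n) ℝ) {c : ℝ} (hc : 0 ≤ c)
    (h : ∀ x : Fin n → ℝ, ‖en (M *ᵥ x)‖ ≤ c * ‖en x‖) : spec M ≤ c :=
  ContinuousLinearMap.opNorm_le_bound _ hc (fun y => h (WithLp.equiv 2 _ y))

lemma dot_mulVec_left {m n : ℕ} (M : Matrix (Fin m) (Fin n) ℝ) (x : Fin m → ℝ) (y : Fin n → ℝ) :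
    x ⬝ᵥ (M *ᵥ y) = (Mᵀ *ᵥ x) ⬝ᵥ y := by
  rw [Matrix.dotProduct_mulVec, Matrix.mulVec_transpose]

lemma dot_nonneg {n : ℕ} (x : Fin n → ℝ) : 0 ≤ x ⬝ᵥ x := by
  rw [← en_norm_sq]; positivity

lemma dot_pos {n : ℕ} {x : Fin n → ℝ} (hx : x ≠ 0) : 0 < x ⬝ᵥ x := by
  rcases (dot_nonneg x).lt_or_eq with h | h
  · exact h
  · exfalso; apply hx
    have h2 : ‖en x‖ ^ 2 = 0 := by rw [en_norm_sq, ← h]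
    have : en x = 0 := by
      have := pow_eq_zero_iff (n := 2) (by norm_num) |>.mp h2
      exact norm_eq_zero.mp this
    funext i
    have : en x i = 0 := by rw [this]; rfl
    exact this

lemma dot_mulVec_le {m n : ℕ} (M : Matrix (Fin m) (Fin n) ℝ) (x : Fin m → ℝ) (y : Fin n → ℝ) :
    |x ⬝ᵥ (M *ᵥ y)| ≤ spec M * ‖en x‖ * ‖en y‖ := by
  have h1 : |(inner ℝ (en x) (en (M *ᵥ y)) : ℝ)| ≤ ‖en x‖ * ‖en (M *ᵥ y)‖ := abs_real_inner_le_norm _ _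
  rw [en_inner] at h1
  calc |x ⬝ᵥ (M *ᵥ y)| ≤ ‖en x‖ * ‖en (M *ᵥ y)‖ := h1
    _ ≤ ‖en x‖ * (spec M * ‖en y‖) := by
        apply mul_le_mul_of_nonneg_left (spec_mulVec M y) (norm_nonneg _)
    _ = spec M * ‖en x‖ * ‖en y‖ := by ring

lemma quad_eq {d p : ℕ} (V : Matrix (Fin d) (Fin p) ℝ) (s : Fin p → ℝ) (w : Fin d → ℝ) :
    w ⬝ᵥ ((V * Matrix.diagonal s * Vᵀ) *ᵥ w) = ∑ i, s i * ((Vᵀ *ᵥ w) i) ^ 2 := by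
  rw [← Matrix.mulVec_mulVec, ← Matrix.mulVec_mulVec, dot_mulVec_left]
  simp only [dotProduct]
  apply Finset.sum_congr rfl
  intro i _
  rw [Matrix.mulVec_diagonal]
  ring

lemma en_mulVec_orth {d p : ℕ} {V : Matrix (Fin d) (Fin p) ℝ} (hV : Vᵀ * V = 1)
    (c : Fin p → ℝ) : ‖en (V *ᵥ c)‖ = ‖en c‖ := by
  have h : ‖en (V *ᵥ c)‖ ^ 2 = ‖en c‖ ^ 2 := by
    rw [en_norm_sq, en_norm_sq, dot_mulVec_left, Matrix.mulVec_mulVec, hV, Matrix.one_mulVec]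
  have h1 := norm_nonneg (en (V *ᵥ c))
  have h2 := norm_nonneg (en c)
  nlinarith

lemma spec_orth_le_one {d p : ℕ} {V : Matrix (Fin d) (Fin p) ℝ} (hV : Vᵀ * V = 1) :
    spec V ≤ 1 := by
  apply spec_le_bound V zero_le_one
  intro x; rw [en_mulVec_orth hV, one_mul]

lemma spec_orthT_le_one {d p : ℕ} {V : Matrix (Fin d) (Fin p) ℝ} (hV : Vᵀ * V = 1) :
    spec Vᵀ ≤ 1 := by rw [spec_transpose]; exact spec_orth_le_one hV

lemma spec_diagonal_le {p : ℕ} {c : Fin p → ℝ} {b : ℝ} (hb : 0 ≤ b) (h : ∀ i, |c i| ≤ b) :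
    spec (Matrix.diagonal c) ≤ b := by
  apply spec_le_bound _ hb
  intro x
  have h2 : ‖en (Matrix.diagonal c *ᵥ x)‖ ^ 2 ≤ (b * ‖en x‖) ^ 2 := by
    rw [en_norm_sq, mul_pow, en_norm_sq]
    simp only [dotProduct, Matrix.mulVec_diagonal]
    rw [Finset.mul_sum]
    apply Finset.sum_le_sum
    intro i _
    have := h i
    have : (c i) ^ 2 ≤ b ^ 2 := by nlinarith [abs_nonneg (c i), sq_abs (c i)]
    nlinarith [sq_nonneg (x i)]
  have hbn : 0 ≤ b * ‖en x‖ := mul_nonneg hb (norm_nonneg _)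
  nlinarith [norm_nonneg (en (Matrix.diagonal c *ᵥ x))]

lemma spec_VdV_le {d p : ℕ} {V : Matrix (Fin d) (Fin p) ℝ} (hV : Vᵀ * V = 1)
    {c : Fin p → ℝ} {b : ℝ} (hb : 0 ≤ b) (h : ∀ i, |c i| ≤ b) :
    spec (V * Matrix.diagonal c * Vᵀ) ≤ b := by
  apply spec_le_bound _ hb
  intro x
  rw [← Matrix.mulVec_mulVec, ← Matrix.mulVec_mulVec, en_mulVec_orth hV]
  calc ‖en (Matrix.diagonal c *ᵥ (Vᵀ *ᵥ x))‖ ≤ spec (Matrix.diagonal c) * ‖en (Vᵀ *ᵥ x)‖ :=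
        spec_mulVec _ _
    _ ≤ b * ‖en x‖ := by
        apply mul_le_mul (spec_diagonal_le hb h) ?_ (norm_nonneg _) hb
        calc ‖en (Vᵀ *ᵥ x)‖ ≤ spec Vᵀ * ‖en x‖ := spec_mulVec _ _
          _ ≤ 1 * ‖en x‖ := mul_le_mul_of_nonneg_right (spec_orthT_le_one hV) (norm_nonneg _)
          _ = ‖en x‖ := one_mul _

/- ---- column-selection matrix ---- -/

def emb (p k : ℕ) (h : k ≤ p) : Matrix (Fin p) (Fin k) ℝ :=
  Matrix.of fun i j => if (i : ℕ) = (j : ℕ) then 1 else 0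

lemma emb_apply {p k : ℕ} (h : k ≤ p) (i : Fin p) (j : Fin k) :
    emb p k h i j = if i = Fin.castLE h j then 1 else 0 := by
  simp only [emb, Matrix.of_apply, Fin.ext_iff, Fin.coe_castLE]

lemma firstCols_eq {m p : ℕ} (U : Matrix (Fin m) (Fin p) ℝ) (k : ℕ) (h : k ≤ p) :
    firstCols U k h = U * emb p k h := by
  ext i j
  simp only [firstCols, Matrix.submatrix_apply, id, Matrix.mul_apply, emb_apply,
    mul_ite, mul_one, mul_zero]
  rw [Finset.sum_ite_eq' Finset.univ (Fin.castLE h j) (fun l => U i l)]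
  simp

lemma embT_emb {p k : ℕ} (h : k ≤ p) : (emb p k h)ᵀ * emb p k h = 1 := by
  ext a b
  simp only [Matrix.mul_apply, Matrix.transpose_apply, emb_apply, ite_mul, one_mul, zero_mul]
  rw [Finset.sum_ite_eq' Finset.univ (Fin.castLE h a) (fun l => if l = Fin.castLE h b then (1:ℝ) else 0)]
  simp only [Finset.mem_univ, if_true]
  by_cases hab : a = b
  · subst hab; simp [Matrix.one_apply]
  · have : ¬ (Fin.castLE h a = Fin.castLE h b) := by
      simp only [Fin.ext_iff, Fin.coe_castLE]; exact fun hc => hab (Fin.ext hc)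
    simp [this, Matrix.one_apply, hab]

lemma emb_embT {p k : ℕ} (h : k ≤ p) :
    emb p k h * (emb p k h)ᵀ
      = Matrix.diagonal (fun i : Fin p => if (i : ℕ) < k then (1:ℝ) else 0) := by
  ext i j
  simp only [Matrix.mul_apply, Matrix.transpose_apply, emb_apply, ite_mul, one_mul, zero_mul]
  by_cases hij : i = j
  · subst hij
    by_cases hik : (i : ℕ) < k
    · rw [Finset.sum_eq_single (⟨(i:ℕ), hik⟩ : Fin k)]
      · simp [Matrix.diagonal_apply, hik, Fin.ext_iff]
      · intro b _ hb
        have : ¬ (i = Fin.castLE h b) := by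
          intro hc
          apply hb; apply Fin.ext
          simpa [Fin.ext_iff, Fin.coe_castLE] using hc.symm
        simp [this]
      · intro hmem; exact absurd (Finset.mem_univ _) hmem
    · rw [Finset.sum_eq_zero]
      · simp [Matrix.diagonal_apply, hik]
      · intro b _
        have : ¬ (i = Fin.castLE h b) := by
          intro hc; apply hik; rw [hc]; simpa using b.2
        simp [this]
  · rw [Finset.sum_eq_zero]
    · simp [Matrix.diagonal_apply, hij]
    · intro b _
      by_cases hib : i = Fin.castLE h b
      · have : ¬ (j = Fin.castLE h b) := fun hc => hij (by rw [hib, hc])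
        simp [this]
      · simp [hib]

lemma emb_mulVec_apply {p k : ℕ} (h : k ≤ p) (c : Fin k → ℝ) (i : Fin p) :
    (emb p k h *ᵥ c) i = if hik : (i : ℕ) < k then c ⟨(i : ℕ), hik⟩ else 0 := by
  rw [Matrix.mulVec, dotProduct]
  by_cases hik : (i : ℕ) < k
  · rw [dif_pos hik, Finset.sum_eq_single (⟨(i : ℕ), hik⟩ : Fin k)]
    · simp [emb]
    · intro b _ hb
      have : ¬ ((i : ℕ) = (b : ℕ)) := fun hc => hb (by simp [Fin.ext_iff, ← hc])
      simp [emb, this]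
    · intro hmem; exact absurd (Finset.mem_univ _) hmem
  · rw [dif_neg hik, Finset.sum_eq_zero]
    intro b _
    have : ¬ ((i : ℕ) = (b : ℕ)) := fun hc => hik (hc ▸ b.2)
    simp [emb, this]

lemma embT_mulVec_apply {p k : ℕ} (h : k ≤ p) (y : Fin p → ℝ) (j : Fin k) :
    ((emb p k h)ᵀ *ᵥ y) j = y (Fin.castLE h j) := by
  rw [Matrix.mulVec, dotProduct]
  rw [Finset.sum_eq_single (Fin.castLE h j)]
  · simp [emb]
  · intro b _ hb
    have : ¬ ((b : ℕ) = (j : ℕ)) := by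
      intro hc; exact hb (by simp [Fin.ext_iff, hc])
    simp [emb, this]
  · intro hmem; exact absurd (Finset.mem_univ _) hmem

/- ---- Moore-Penrose for orthonormal columns ---- -/

lemma isMP_unique {m n : ℕ} {X : Matrix (Fin m) (Fin n) ℝ} {Y₁ Y₂ : Matrix (Fin n) (Fin m) ℝ}
    (h1 : IsMP X Y₁) (h2 : IsMP X Y₂) : Y₁ = Y₂ := by
  obtain ⟨a1, b1, c1, d1⟩ := h1
  obtain ⟨a2, b2, c2, d2⟩ := h2
  have hXY : X * Y₁ = X * Y₂ := by
    calc X * Y₁ = (X * Y₁)ᵀ := c1.symm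
      _ = Y₁ᵀ * Xᵀ := by rw [Matrix.transpose_mul]
      _ = Y₁ᵀ * (X * Y₂ * X)ᵀ := by rw [a2]
      _ = Y₁ᵀ * (Xᵀ * (X * Y₂)ᵀ) := by rw [Matrix.transpose_mul]
      _ = (Y₁ᵀ * Xᵀ) * (X * Y₂)ᵀ := by rw [Matrix.mul_assoc]
      _ = (X * Y₁)ᵀ * (X * Y₂)ᵀ := by rw [← Matrix.transpose_mul X Y₁]
      _ = (X * Y₁) * (X * Y₂) := by rw [c1, c2]
      _ = (X * Y₁ * X) * Y₂ := by simp only [Matrix.mul_assoc]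
      _ = X * Y₂ := by rw [a1]
  have hYX : Y₁ * X = Y₂ * X := by
    calc Y₁ * X = (Y₁ * X)ᵀ := d1.symm
      _ = Xᵀ * Y₁ᵀ := by rw [Matrix.transpose_mul]
      _ = (X * Y₂ * X)ᵀ * Y₁ᵀ := by rw [a2]
      _ = ((Y₂ * X)ᵀ * Xᵀ) * Y₁ᵀ := by
          rw [show X * Y₂ * X = X * (Y₂ * X) from Matrix.mul_assoc _ _ _, Matrix.transpose_mul]
      _ = (Y₂ * X)ᵀ * (Xᵀ * Y₁ᵀ) := by rw [Matrix.mul_assoc]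
      _ = (Y₂ * X) * (Y₁ * X)ᵀ := by rw [d2, Matrix.transpose_mul]
      _ = (Y₂ * X) * (Y₁ * X) := by rw [d1]
      _ = Y₂ * (X * Y₁ * X) := by simp only [Matrix.mul_assoc]
      _ = Y₂ * X := by rw [a1]
  calc Y₁ = Y₁ * X * Y₁ := b1.symm
    _ = Y₂ * X * Y₁ := by rw [hYX]
    _ = Y₂ * (X * Y₁) := Matrix.mul_assoc _ _ _
    _ = Y₂ * (X * Y₂) := by rw [hXY]
    _ = Y₂ * X * Y₂ := (Matrix.mul_assoc _ _ _).symm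
    _ = Y₂ := b2

lemma pinv_eq {m n : ℕ} {X : Matrix (Fin m) (Fin n) ℝ} {Y : Matrix (Fin n) (Fin m) ℝ}
    (hY : IsMP X Y) : pinv X = Y := by
  have hex : ∃ Y, IsMP X Y := ⟨Y, hY⟩
  rw [pinv, dif_pos hex]
  exact isMP_unique hex.choose_spec hY

lemma isMP_orth {m p : ℕ} {N : Matrix (Fin m) (Fin p) ℝ} (hN : Nᵀ * N = 1) : IsMP N Nᵀ := by
  refine ⟨?_, ?_, ?_, ?_⟩
  · rw [Matrix.mul_assoc, hN, Matrix.mul_one]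
  · rw [hN, Matrix.one_mul]
  · rw [Matrix.transpose_mul, Matrix.transpose_transpose]
  · rw [hN, Matrix.transpose_one]

lemma projCol_orth {m p : ℕ} {N : Matrix (Fin m) (Fin p) ℝ} (hN : Nᵀ * N = 1) :
    projCol N = N * Nᵀ := by rw [projCol, pinv_eq (isMP_orth hN)]

/- ---- dimension counting ---- -/

lemma exists_common_vec {d a b : ℕ} (hba : b < a)
    (B : Matrix (Fin d) (Fin a) ℝ) (hB : Bᵀ * B = 1) (C : Matrix (Fin d) (Fin b) ℝ) :
    ∃ w : Fin d → ℝ, w ≠ 0 ∧ (∃ c, B *ᵥ c = w) ∧ Cᵀ *ᵥ w = 0 := by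
  classical
  set f := Matrix.mulVecLin B with hf
  have hinj : Function.Injective f := by
    intro x y hxy
    have h2 : Bᵀ *ᵥ (B *ᵥ x) = Bᵀ *ᵥ (B *ᵥ y) := by
      simpa only [hf, Matrix.mulVecLin_apply] using congrArg (fun v => Bᵀ *ᵥ v) hxy
    simpa only [Matrix.mulVec_mulVec, hB, Matrix.one_mulVec] using h2
  set g := Matrix.mulVecLin Cᵀ with hg
  let W₁ := LinearMap.range f
  let W₂ := LinearMap.ker g
  have h1 : Module.finrank ℝ W₁ = a := by
    rw [LinearMap.finrank_range_of_inj hinj]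
    simp [Module.finrank_pi]
  have h2 : d ≤ b + Module.finrank ℝ W₂ := by
    have : Module.finrank ℝ (LinearMap.range g) + Module.finrank ℝ W₂ = Module.finrank ℝ (Fin d → ℝ) :=
      LinearMap.finrank_range_add_finrank_ker g
    have hle : Module.finrank ℝ (LinearMap.range g) ≤ b := by
      have := Submodule.finrank_le (LinearMap.range g)
      simpa [Module.finrank_pi] using this
    have hd : Module.finrank ℝ (Fin d → ℝ) = d := by simp [Module.finrank_pi]
    omega
  have h3 : Module.finrank ℝ (W₁ ⊔ W₂ : Submodule ℝ (Fin d → ℝ)) ≤ d := by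
    have := Submodule.finrank_le (W₁ ⊔ W₂ : Submodule ℝ (Fin d → ℝ))
    simpa [Module.finrank_pi] using this
  have h4 := Submodule.finrank_sup_add_finrank_inf_eq W₁ W₂
  have h5 : 0 < Module.finrank ℝ (W₁ ⊓ W₂ : Submodule ℝ (Fin d → ℝ)) := by omega
  obtain ⟨x, hx⟩ := Module.finrank_pos_iff_exists_ne_zero.mp h5
  refine ⟨x.1, ?_, ?_, ?_⟩
  · intro h0
    exact hx (Subtype.ext h0)
  · obtain ⟨c, hc⟩ := x.2.1
    exact ⟨c, hc⟩
  · exact x.2.2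

lemma rank_ge_of_inj_on {d m k : ℕ} (M : Matrix (Fin m) (Fin d) ℝ)
    (B : Matrix (Fin d) (Fin k) ℝ) (hB : Bᵀ * B = 1)
    (h : ∀ w : Fin d → ℝ, (∃ c, B *ᵥ c = w) → M *ᵥ w = 0 → w = 0) : k ≤ M.rank := by
  classical
  set fB := Matrix.mulVecLin B with hfB
  have hinj : Function.Injective fB := by
    intro x y hxy
    have h2 : Bᵀ *ᵥ (B *ᵥ x) = Bᵀ *ᵥ (B *ᵥ y) := by
      simpa only [hfB, Matrix.mulVecLin_apply] using congrArg (fun v => Bᵀ *ᵥ v) hxy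
    simpa only [Matrix.mulVec_mulVec, hB, Matrix.one_mulVec] using h2
  set W := LinearMap.range fB with hW
  have hWk : Module.finrank ℝ W = k := by
    rw [hW, LinearMap.finrank_range_of_inj hinj]; simp [Module.finrank_pi]
  set f := Matrix.mulVecLin M with hf
  have hinj2 : Function.Injective (f.domRestrict W) := by
    rw [← LinearMap.ker_eq_bot, LinearMap.ker_eq_bot']
    rintro ⟨w, hw⟩ hww
    obtain ⟨c, hc⟩ := hw
    have : M *ᵥ w = 0 := by
      simpa only [hf, LinearMap.domRestrict_apply, Matrix.mulVecLin_apply] using hww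
    have hw0 : w = 0 := h w ⟨c, hc⟩ this
    exact Subtype.ext hw0
  have : Module.finrank ℝ (LinearMap.range (f.domRestrict W)) = k := by
    rw [LinearMap.finrank_range_of_inj hinj2, hWk]
  rw [Matrix.rank, ← hf]
  calc k = Module.finrank ℝ (LinearMap.range (f.domRestrict W)) := this.symm
    _ ≤ Module.finrank ℝ (LinearMap.range f) :=
        Submodule.finrank_mono (LinearMap.range_domRestrict_le_range f W)

/- ---- quadratic form bounds ---- -/

lemma bessel {d p : ℕ} {V : Matrix (Fin d) (Fin p) ℝ} (hV : Vᵀ * V = 1) (w : Fin d → ℝ) :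
    (Vᵀ *ᵥ w) ⬝ᵥ (Vᵀ *ᵥ w) ≤ w ⬝ᵥ w := by
  rw [← en_norm_sq, ← en_norm_sq]
  have h1 : ‖en (Vᵀ *ᵥ w)‖ ≤ 1 * ‖en w‖ := by
    calc ‖en (Vᵀ *ᵥ w)‖ ≤ spec Vᵀ * ‖en w‖ := spec_mulVec _ _
      _ ≤ 1 * ‖en w‖ := mul_le_mul_of_nonneg_right (spec_orthT_le_one hV) (norm_nonneg _)
  rw [one_mul] at h1
  have := norm_nonneg (en (Vᵀ *ᵥ w))
  nlinarith

lemma quad_tail_le {d p k : ℕ} {V : Matrix (Fin d) (Fin p) ℝ} (hV : Vᵀ * V = 1)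
    (s : Fin p → ℝ) {b : ℝ} (hb : 0 ≤ b) (hsb : ∀ i : Fin p, k ≤ (i : ℕ) → s i ≤ b)
    (w : Fin d → ℝ) (hw : ∀ i : Fin p, (i : ℕ) < k → (Vᵀ *ᵥ w) i = 0) :
    w ⬝ᵥ ((V * Matrix.diagonal s * Vᵀ) *ᵥ w) ≤ b * (w ⬝ᵥ w) := by
  rw [quad_eq]
  calc ∑ i, s i * ((Vᵀ *ᵥ w) i) ^ 2 ≤ ∑ i, b * ((Vᵀ *ᵥ w) i) ^ 2 := by
        apply Finset.sum_le_sum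
        intro i _
        by_cases hik : (i : ℕ) < k
        · rw [hw i hik]; simp
        · exact mul_le_mul_of_nonneg_right (hsb i (le_of_not_gt hik)) (sq_nonneg _)
    _ = b * ((Vᵀ *ᵥ w) ⬝ᵥ (Vᵀ *ᵥ w)) := by
        rw [dotProduct, Finset.mul_sum]; apply Finset.sum_congr rfl; intro i _; ring
    _ ≤ b * (w ⬝ᵥ w) := mul_le_mul_of_nonneg_left (bessel hV w) hb

lemma quad_head_ge {d p k : ℕ} {V : Matrix (Fin d) (Fin p) ℝ} (hV : Vᵀ * V = 1)
    (s : Fin p → ℝ) {b : ℝ} (hsb : ∀ i : Fin p, (i : ℕ) < k → b ≤ s i)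
    (z : Fin p → ℝ) (hz : ∀ i : Fin p, k ≤ (i : ℕ) → z i = 0) :
    b * ((V *ᵥ z) ⬝ᵥ (V *ᵥ z)) ≤ (V *ᵥ z) ⬝ᵥ ((V * Matrix.diagonal s * Vᵀ) *ᵥ (V *ᵥ z)) := by
  have hy : Vᵀ *ᵥ (V *ᵥ z) = z := by
    rw [Matrix.mulVec_mulVec, hV, Matrix.one_mulVec]
  have hnorm : (V *ᵥ z) ⬝ᵥ (V *ᵥ z) = z ⬝ᵥ z := by
    rw [dot_mulVec_left, hy]
  rw [quad_eq, hy, hnorm, dotProduct, Finset.mul_sum]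
  apply Finset.sum_le_sum
  intro i _
  by_cases hik : (i : ℕ) < k
  · have := hsb i hik
    nlinarith [sq_nonneg (z i)]
  · rw [hz i (le_of_not_gt hik)]; simp

/- ---- algebraic identities ---- -/

lemma key_identity {d : ℕ} (P Q G G' H : Matrix (Fin d) (Fin d) ℝ)
    (hQQ : Q * Q = Q) (hcomm : G' * Q = Q * G') (hPH : P * H = H) (hGH : G * H = P) :
    (G' * (1 - Q)) * ((1 - Q) * P) * H - ((1 - Q) * (G' - G)) * H = (1 - Q) * P := by
  have hRR : (1 - Q) * (1 - Q) = (1 - Q : Matrix (Fin d) (Fin d) ℝ) := by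
    simp only [Matrix.mul_sub, Matrix.sub_mul, Matrix.mul_one, Matrix.one_mul, hQQ]
    abel
  have hcR : G' * (1 - Q) = (1 - Q) * G' := by
    simp only [Matrix.mul_sub, Matrix.sub_mul, Matrix.mul_one, Matrix.one_mul, hcomm]
  calc (G' * (1 - Q)) * ((1 - Q) * P) * H - ((1 - Q) * (G' - G)) * H
      = ((1 - Q) * G') * ((1 - Q) * P) * H - ((1 - Q) * (G' - G)) * H := by rw [hcR]
    _ = (1 - Q) * (G' * ((1 - Q) * (P * H))) - (1 - Q) * ((G' - G) * H) := by
        simp only [Matrix.mul_assoc]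
    _ = (1 - Q) * (G' * ((1 - Q) * H)) - (1 - Q) * (G' * H) + (1 - Q) * (G * H) := by
        rw [hPH, Matrix.sub_mul G' G H, Matrix.mul_sub (1 - Q) (G' * H) (G * H)]
        abel
    _ = (1 - Q) * (G' * H) - (1 - Q) * (G' * H) + (1 - Q) * P := by
        rw [hGH]
        have e1 : G' * ((1 - Q) * H) = (1 - Q) * (G' * H) := by
          rw [← Matrix.mul_assoc, hcR, Matrix.mul_assoc]
        rw [e1, ← Matrix.mul_assoc (1 - Q) (1 - Q) (G' * H), hRR]
    _ = (1 - Q) * P := by abel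

lemma norm_solve {τ e a μ β : ℝ} (hτ : 0 ≤ τ) (he : 0 ≤ e) (hμ : 0 ≤ μ) (hβ : 0 ≤ β)
    (hβa : β * a ≤ 1) (ha : 0 < a) (hμa : μ < a) (h : τ ≤ μ * τ * β + e * β) :
    τ ≤ e / (a - μ) := by
  rw [le_div_iff₀ (by linarith)]
  nlinarith [mul_nonneg (mul_nonneg hμ hτ) hβ, mul_nonneg he hβ,
    mul_le_mul_of_nonneg_left hβa (mul_nonneg hμ hτ),
    mul_le_mul_of_nonneg_left hβa he]

lemma spec_proj_diff_le {d : ℕ} (P Q : Matrix (Fin d) (Fin d) ℝ)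
    (hPt : Pᵀ = P) (hPP : P * P = P) (hQt : Qᵀ = Q) (hQQ : Q * Q = Q) {c : ℝ} (hc : 0 ≤ c)
    (h1 : spec ((1 - Q) * P) ≤ c) (h2 : spec (Q * (1 - P)) ≤ c) : spec (Q - P) ≤ c := by
  apply spec_le_bound _ hc
  intro x
  set u := P *ᵥ x with hu
  set v := (1 - P) *ᵥ x with hv
  have huv : u + v = x := by
    rw [hu, hv, Matrix.sub_mulVec, Matrix.one_mulVec]; abel
  have hQPx : (Q - P) *ᵥ x = Q *ᵥ v - (1 - Q) *ᵥ u := by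
    have e1 : Q *ᵥ v = Q *ᵥ x - Q *ᵥ (P *ᵥ x) := by
      rw [hv, Matrix.sub_mulVec, Matrix.one_mulVec, Matrix.mulVec_sub]
    have e2 : (1 - Q) *ᵥ u = P *ᵥ x - Q *ᵥ (P *ᵥ x) := by
      rw [hu, Matrix.sub_mulVec, Matrix.one_mulVec]
    rw [e1, e2, Matrix.sub_mulVec]
    abel
  have hcross : (Q *ᵥ v) ⬝ᵥ ((1 - Q) *ᵥ u) = 0 := by
    rw [dot_mulVec_left]
    have ht : ((1 : Matrix (Fin d) (Fin d) ℝ) - Q)ᵀ = 1 - Q := by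
      rw [Matrix.transpose_sub, Matrix.transpose_one, hQt]
    rw [ht, Matrix.mulVec_mulVec]
    have : ((1 : Matrix (Fin d) (Fin d) ℝ) - Q) * Q = 0 := by
      rw [Matrix.sub_mul, Matrix.one_mul, hQQ, sub_self]
    rw [this, Matrix.zero_mulVec, zero_dotProduct]
  have hcross2 : u ⬝ᵥ v = 0 := by
    rw [hu, hv, dot_mulVec_left]
    have : ((1 : Matrix (Fin d) (Fin d) ℝ) - P)ᵀ *ᵥ (P *ᵥ x) = 0 := by
      rw [Matrix.transpose_sub, Matrix.transpose_one, hPt, Matrix.mulVec_mulVec,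
        Matrix.sub_mul, Matrix.one_mul, hPP, sub_self, Matrix.zero_mulVec]
    rw [this, zero_dotProduct]
  have hQv : ‖en (Q *ᵥ v)‖ ≤ c * ‖en v‖ := by
    have hvv : (1 - P) *ᵥ v = v := by
      rw [hv, Matrix.mulVec_mulVec]
      have : ((1 : Matrix (Fin d) (Fin d) ℝ) - P) * (1 - P) = 1 - P := by
        simp only [Matrix.mul_sub, Matrix.sub_mul, Matrix.mul_one, Matrix.one_mul, hPP]
        abel
      rw [this]
    calc ‖en (Q *ᵥ v)‖ = ‖en ((Q * (1 - P)) *ᵥ v)‖ := by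
          rw [← Matrix.mulVec_mulVec, hvv]
      _ ≤ spec (Q * (1 - P)) * ‖en v‖ := spec_mulVec _ _
      _ ≤ c * ‖en v‖ := mul_le_mul_of_nonneg_right h2 (norm_nonneg _)
  have hRu : ‖en ((1 - Q) *ᵥ u)‖ ≤ c * ‖en u‖ := by
    have huu : P *ᵥ u = u := by
      rw [hu, Matrix.mulVec_mulVec, hPP]
    calc ‖en ((1 - Q) *ᵥ u)‖ = ‖en (((1 - Q) * P) *ᵥ u)‖ := by
          rw [← Matrix.mulVec_mulVec, huu]
      _ ≤ spec ((1 - Q) * P) * ‖en u‖ := spec_mulVec _ _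
      _ ≤ c * ‖en u‖ := mul_le_mul_of_nonneg_right h1 (norm_nonneg _)
  have hsq : ‖en ((Q - P) *ᵥ x)‖ ^ 2 = ‖en (Q *ᵥ v)‖ ^ 2 + ‖en ((1 - Q) *ᵥ u)‖ ^ 2 := by
    rw [hQPx, en_norm_sq, en_norm_sq, en_norm_sq]
    have expand : (Q *ᵥ v - (1 - Q) *ᵥ u) ⬝ᵥ (Q *ᵥ v - (1 - Q) *ᵥ u)
        = (Q *ᵥ v) ⬝ᵥ (Q *ᵥ v) - 2 * ((Q *ᵥ v) ⬝ᵥ ((1 - Q) *ᵥ u))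
          + ((1 - Q) *ᵥ u) ⬝ᵥ ((1 - Q) *ᵥ u) := by
      simp only [sub_dotProduct, dotProduct_sub]
      have : ((1 - Q) *ᵥ u) ⬝ᵥ (Q *ᵥ v) = (Q *ᵥ v) ⬝ᵥ ((1 - Q) *ᵥ u) :=
        dotProduct_comm _ _
      rw [this]; ring
    rw [expand, hcross]; ring
  have hxsq : ‖en x‖ ^ 2 = ‖en u‖ ^ 2 + ‖en v‖ ^ 2 := by
    rw [en_norm_sq, en_norm_sq, en_norm_sq, ← huv]
    have expand : (u + v) ⬝ᵥ (u + v) = u ⬝ᵥ u + 2 * (u ⬝ᵥ v) + v ⬝ᵥ v := by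
      simp only [add_dotProduct, dotProduct_add]
      have : v ⬝ᵥ u = u ⬝ᵥ v := dotProduct_comm _ _
      rw [this]; ring
    rw [expand, hcross2]; ring
  have final : ‖en ((Q - P) *ᵥ x)‖ ^ 2 ≤ (c * ‖en x‖) ^ 2 := by
    rw [hsq]
    have h1' := norm_nonneg (en (Q *ᵥ v))
    have h2' := norm_nonneg (en ((1 - Q) *ᵥ u))
    have h3' := norm_nonneg (en u)
    have h4' := norm_nonneg (en v)
    have ha2 := pow_le_pow_left₀ h1' hQv 2
    have hb2 := pow_le_pow_left₀ h2' hRu 2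
    have hx2 : c ^ 2 * ‖en x‖ ^ 2 = c ^ 2 * ‖en u‖ ^ 2 + c ^ 2 * ‖en v‖ ^ 2 := by
      rw [hxsq]; ring
    nlinarith [ha2, hb2, hx2]
  have := norm_nonneg (en ((Q - P) *ᵥ x))
  have hcx : 0 ≤ c * ‖en x‖ := mul_nonneg hc (norm_nonneg _)
  nlinarith

/- ---- more helpers ---- -/

lemma VdV_mul {d p : ℕ} {V : Matrix (Fin d) (Fin p) ℝ} (hV : Vᵀ * V = 1) (c c' : Fin p → ℝ) :
    (V * Matrix.diagonal c * Vᵀ) * (V * Matrix.diagonal c' * Vᵀ)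
      = V * Matrix.diagonal (fun i => c i * c' i) * Vᵀ := by
  have : (V * Matrix.diagonal c * Vᵀ) * (V * Matrix.diagonal c' * Vᵀ)
      = V * (Matrix.diagonal c * ((Vᵀ * V) * (Matrix.diagonal c' * Vᵀ))) := by
    simp only [Matrix.mul_assoc]
  rw [this, hV, Matrix.one_mul, ← Matrix.mul_assoc (Matrix.diagonal c),
    Matrix.diagonal_mul_diagonal, ← Matrix.mul_assoc]

lemma VdV_sub {d p : ℕ} (V : Matrix (Fin d) (Fin p) ℝ) (c c' : Fin p → ℝ) :
    V * Matrix.diagonal c * Vᵀ - V * Matrix.diagonal c' * Vᵀ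
      = V * Matrix.diagonal (fun i => c i - c' i) * Vᵀ := by
  have : Matrix.diagonal (fun i => c i - c' i) = Matrix.diagonal c - Matrix.diagonal c' := by
    rw [Matrix.diagonal_sub]
  rw [this, Matrix.mul_sub, Matrix.sub_mul]

lemma VdV_transpose {d p : ℕ} (V : Matrix (Fin d) (Fin p) ℝ) (c : Fin p → ℝ) :
    (V * Matrix.diagonal c * Vᵀ)ᵀ = V * Matrix.diagonal c * Vᵀ := by
  rw [Matrix.transpose_mul, Matrix.transpose_mul, Matrix.transpose_transpose,
    Matrix.diagonal_transpose, Matrix.mul_assoc]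

lemma gram_svd {m n p : ℕ} {X : Matrix (Fin m) (Fin n) ℝ} {U : Matrix (Fin m) (Fin p) ℝ}
    {s : Fin p → ℝ} {V : Matrix (Fin n) (Fin p) ℝ} (h : IsThinSVD X U s V) :
    Xᵀ * X = V * Matrix.diagonal (fun i => s i ^ 2) * Vᵀ := by
  obtain ⟨hU, hV, -, -, hX⟩ := h
  rw [hX]
  have ht : (U * Matrix.diagonal s * Vᵀ)ᵀ = V * (Matrix.diagonal s * Uᵀ) := by
    rw [Matrix.transpose_mul (U * Matrix.diagonal s) Vᵀ, Matrix.transpose_mul U,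
      Matrix.transpose_transpose, Matrix.diagonal_transpose]
  rw [ht]
  have e : (V * (Matrix.diagonal s * Uᵀ)) * (U * Matrix.diagonal s * Vᵀ)
      = V * (Matrix.diagonal s * ((Uᵀ * U) * (Matrix.diagonal s * Vᵀ))) := by
    simp only [Matrix.mul_assoc]
  rw [e, hU, Matrix.one_mul, ← Matrix.mul_assoc (Matrix.diagonal s),
    Matrix.diagonal_mul_diagonal, ← Matrix.mul_assoc]
  have : (fun i => s i * s i) = fun i => s i ^ 2 := by funext i; ring
  rw [this]

lemma firstCols_orth {d p k : ℕ} {V : Matrix (Fin d) (Fin p) ℝ} (hV : Vᵀ * V = 1) (h : k ≤ p) :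
    (firstCols V k h)ᵀ * firstCols V k h = 1 := by
  rw [firstCols_eq, Matrix.transpose_mul]
  have : (emb p k h)ᵀ * Vᵀ * (V * emb p k h) = (emb p k h)ᵀ * ((Vᵀ * V) * emb p k h) := by
    simp only [Matrix.mul_assoc]
  rw [this, hV, Matrix.one_mul, embT_emb]

lemma firstCols_proj {d p k : ℕ} {V : Matrix (Fin d) (Fin p) ℝ} (h : k ≤ p) :
    firstCols V k h * (firstCols V k h)ᵀ
      = V * Matrix.diagonal (fun i : Fin p => if (i : ℕ) < k then (1:ℝ) else 0) * Vᵀ := by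
  rw [firstCols_eq, Matrix.transpose_mul]
  have : V * emb p k h * ((emb p k h)ᵀ * Vᵀ) = V * (emb p k h * (emb p k h)ᵀ) * Vᵀ := by
    simp only [Matrix.mul_assoc]
  rw [this, emb_embT]

lemma gram_quad {m n : ℕ} (M : Matrix (Fin m) (Fin n) ℝ) (w : Fin n → ℝ) :
    w ⬝ᵥ ((Mᵀ * M) *ᵥ w) = (M *ᵥ w) ⬝ᵥ (M *ᵥ w) := by
  rw [← Matrix.mulVec_mulVec, dot_mulVec_left, Matrix.transpose_transpose]

lemma spec_proj_le_one {d : ℕ} {R : Matrix (Fin d) (Fin d) ℝ} (hRt : Rᵀ = R) (hRR : R * R = R) :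
    spec R ≤ 1 := by
  apply spec_le_bound _ zero_le_one
  intro x
  have h2 : ‖en (R *ᵥ x)‖ ^ 2 = x ⬝ᵥ (R *ᵥ x) := by
    rw [en_norm_sq, ← gram_quad, hRt, hRR]
  have h3 : x ⬝ᵥ (R *ᵥ x) ≤ ‖en x‖ * ‖en (R *ᵥ x)‖ := by
    rw [← en_inner]; exact real_inner_le_norm _ _
  rw [one_mul]
  nlinarith [norm_nonneg (en x), norm_nonneg (en (R *ᵥ x))]

lemma fc_perp {d p k : ℕ} (h : k ≤ p) {V : Matrix (Fin d) (Fin p) ℝ} {w : Fin d → ℝ}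
    (h0 : (firstCols V k h)ᵀ *ᵥ w = 0) : ∀ i : Fin p, (i : ℕ) < k → (Vᵀ *ᵥ w) i = 0 := by
  intro i hik
  have := congrFun h0 ⟨(i : ℕ), hik⟩
  rw [firstCols_eq, Matrix.transpose_mul, ← Matrix.mulVec_mulVec, embT_mulVec_apply] at this
  simpa using this

lemma fc_span {d p k : ℕ} (h : k ≤ p) {V : Matrix (Fin d) (Fin p) ℝ} {w : Fin d → ℝ}
    (hw : ∃ c, firstCols V k h *ᵥ c = w) :
    ∃ z : Fin p → ℝ, (∀ i : Fin p, k ≤ (i : ℕ) → z i = 0) ∧ V *ᵥ z = w := by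
  obtain ⟨c, hc⟩ := hw
  refine ⟨emb p k h *ᵥ c, ?_, ?_⟩
  · intro i hik
    rw [emb_mulVec_apply, dif_neg (by omega)]
  · rw [Matrix.mulVec_mulVec, ← firstCols_eq, hc]

lemma quad_abs_le {n : ℕ} (M : Matrix (Fin n) (Fin n) ℝ) (w : Fin n → ℝ) :
    |w ⬝ᵥ (M *ᵥ w)| ≤ spec M * (w ⬝ᵥ w) := by
  have := dot_mulVec_le M w w
  calc |w ⬝ᵥ (M *ᵥ w)| ≤ spec M * ‖en w‖ * ‖en w‖ := this
    _ = spec M * (w ⬝ᵥ w) := by rw [mul_assoc, ← pow_two, en_norm_sq]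

lemma spec_identity_bound {d : ℕ} (Gh T H R E : Matrix (Fin d) (Fin d) ℝ)
    (hid : Gh * T * H - (R * E) * H = T) {μ e β : ℝ}
    (hGh : spec Gh ≤ μ) (hR : spec R ≤ 1) (hE : spec E ≤ e) (hH : spec H ≤ β)
    (hμ : 0 ≤ μ) (he : 0 ≤ e) (hβ : 0 ≤ β) :
    spec T ≤ μ * spec T * β + e * β := by
  have b1 : spec (Gh * T * H) ≤ μ * spec T * β := by
    calc spec (Gh * T * H) ≤ spec (Gh * T) * spec H := spec_mul_le _ _
      _ ≤ (μ * spec T) * β :=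
          mul_le_mul (le_trans (spec_mul_le _ _)
            (mul_le_mul_of_nonneg_right hGh (spec_nonneg _))) hH (spec_nonneg _)
            (mul_nonneg hμ (spec_nonneg _))
  have b2 : spec ((R * E) * H) ≤ e * β := by
    calc spec ((R * E) * H) ≤ spec (R * E) * spec H := spec_mul_le _ _
      _ ≤ e * β := by
          apply mul_le_mul ?_ hH (spec_nonneg _) he
          calc spec (R * E) ≤ spec R * spec E := spec_mul_le _ _
            _ ≤ 1 * e := mul_le_mul hR hE (spec_nonneg _) zero_le_one
            _ = e := one_mul e
  calc spec T = spec (Gh * T * H - (R * E) * H) := by rw [hid]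
    _ ≤ spec (Gh * T * H) + spec ((R * E) * H) := spec_sub_le _ _
    _ ≤ μ * spec T * β + e * β := by linarith

lemma sv_eq {p : ℕ} (s : Fin p → ℝ) (i : ℕ) (h : i - 1 < p) : sv s i = s ⟨i - 1, h⟩ := by
  unfold sv; rw [dif_pos h]

lemma sv_eq_zero {p : ℕ} (s : Fin p → ℝ) (i : ℕ) (h : ¬ (i - 1 < p)) : sv s i = 0 := by
  unfold sv; rw [dif_neg h]

end Aux

set_option maxHeartbeats 3200000

/-- deterministic left-sketching lemma. If
`‖Aᵀ Sᵀ S A − Aᵀ A‖₂ ≤ ε σ₁(A)²` with `ε < gap_k(A)`, then `S A` has rank at least `k`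
and `d₂(V_{SA,k}, V_{A,k}) ≤ ε / (gap_k(A) − ε)`. -/
theorem statement13
    {n d t k : ℕ} (hk0 : 0 < k)
    (A : Matrix (Fin n) (Fin d) ℝ)
    (UA : Matrix (Fin n) (Fin (min n d)) ℝ) (sA : Fin (min n d) → ℝ)
    (VA : Matrix (Fin d) (Fin (min n d)) ℝ)
    (hSVD : IsThinSVD A UA sA VA)
    (hkrank : k ≤ A.rank) (hkp : k ≤ min n d) (hktd : k ≤ min t d)
    (hgap : sv sA (k + 1) < sv sA k)
    (S : Matrix (Fin t) (Fin n) ℝ) (ε : ℝ)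
    (hGram : spec (Aᵀ * Sᵀ * S * A - Aᵀ * A) ≤ ε * sv sA 1 ^ 2)
    (hε : ε < (sv sA k ^ 2 - sv sA (k + 1) ^ 2) / sv sA 1 ^ 2) :
    k ≤ (S * A).rank ∧
    ∀ (US : Matrix (Fin t) (Fin (min t d)) ℝ) (sS : Fin (min t d) → ℝ)
      (VS : Matrix (Fin d) (Fin (min t d)) ℝ), IsThinSVD (S * A) US sS VS →
      d2 (firstCols VS k hktd) (firstCols VA k hkp)
        ≤ ε / ((sv sA k ^ 2 - sv sA (k + 1) ^ 2) / sv sA 1 ^ 2 - ε) := by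
  obtain ⟨hUA, hVA, hantiA, hposA, hAeq⟩ := hSVD
  have hp0 : 0 < min n d := lt_of_lt_of_le hk0 hkp
  have hk1p : k - 1 < min n d := by omega
  have hsv1 : sv sA 1 = sA ⟨1 - 1, by omega⟩ := sv_eq sA 1 (by omega)
  have hsvk : sv sA k = sA ⟨k - 1, hk1p⟩ := sv_eq sA k hk1p
  have hσk1_nonneg : 0 ≤ sv sA (k + 1) := by
    by_cases h : k + 1 - 1 < min n d
    · rw [sv_eq sA (k + 1) h]; exact hposA _
    · rw [sv_eq_zero sA (k + 1) h]
  have hσk_pos : 0 < sv sA k := lt_of_le_of_lt hσk1_nonneg hgap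
  have hle1 : ∀ i : Fin (min n d), sA i ≤ sv sA 1 := by
    intro i
    rw [hsv1]
    exact hantiA (show (⟨1 - 1, by omega⟩ : Fin (min n d)) ≤ i from by
      simp only [Fin.le_def]; omega)
  have hσ1_pos : 0 < sv sA 1 := lt_of_lt_of_le hσk_pos (by rw [hsvk]; exact hle1 _)
  have hε0 : 0 ≤ ε := by
    have h1 := le_trans (spec_nonneg _) hGram
    have h2 : (0:ℝ) < sv sA 1 ^ 2 := by positivity
    exact (mul_nonneg_iff_of_pos_right h2).mp h1
  have hgapε : ε * sv sA 1 ^ 2 < sv sA k ^ 2 - sv sA (k + 1) ^ 2 := by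
    have := (lt_div_iff₀ (by positivity : (0:ℝ) < sv sA 1 ^ 2)).mp hε
    linarith
  -- Gram matrices
  have hGA : Aᵀ * A = VA * Matrix.diagonal (fun i => sA i ^ 2) * VAᵀ :=
    gram_svd ⟨hUA, hVA, hantiA, hposA, hAeq⟩
  have hE' : Aᵀ * Sᵀ * S * A = (S * A)ᵀ * (S * A) := by
    rw [Matrix.transpose_mul, Matrix.mul_assoc (Aᵀ * Sᵀ) S A]
  set e := spec ((S * A)ᵀ * (S * A) - Aᵀ * A) with he_def
  have he : e ≤ ε * sv sA 1 ^ 2 := by rw [he_def, ← hE']; exact hGram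
  have he0 : 0 ≤ e := spec_nonneg _
  -- lower bound on the quadratic form over the top-k span of VA
  have headA : ∀ w : Fin d → ℝ, (∃ c, firstCols VA k hkp *ᵥ c = w) →
      sv sA k ^ 2 * (w ⬝ᵥ w) ≤ w ⬝ᵥ ((Aᵀ * A) *ᵥ w) := by
    intro w hw
    obtain ⟨z, hz, hVz⟩ := fc_span hkp hw
    rw [hGA, ← hVz]
    apply quad_head_ge hVA (fun i => sA i ^ 2) ?_ z hz
    intro i hik
    show sv sA k ^ 2 ≤ sA i ^ 2
    have h1 : sA ⟨k - 1, hk1p⟩ ≤ sA i := by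
      apply hantiA
      simp only [Fin.le_def]
      omega
    have h2 : 0 ≤ sA i := hposA i
    have h3 : 0 ≤ sA ⟨k - 1, hk1p⟩ := hposA _
    rw [hsvk]
    nlinarith
  have habsE : ∀ w : Fin d → ℝ,
      |w ⬝ᵥ (((S * A)ᵀ * (S * A) - Aᵀ * A) *ᵥ w)| ≤ e * (w ⬝ᵥ w) := fun w => quad_abs_le _ w
  have hsplit : ∀ w : Fin d → ℝ,
      w ⬝ᵥ (((S * A)ᵀ * (S * A) - Aᵀ * A) *ᵥ w)
        = w ⬝ᵥ (((S * A)ᵀ * (S * A)) *ᵥ w) - w ⬝ᵥ ((Aᵀ * A) *ᵥ w) := by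
    intro w
    rw [Matrix.sub_mulVec, dotProduct_sub]
  constructor
  · -- rank part
    apply rank_ge_of_inj_on (S * A) (firstCols VA k hkp) (firstCols_orth hVA hkp)
    intro w hw hzero
    by_contra hw0
    have hpos : 0 < w ⬝ᵥ w := dot_pos hw0
    have hG := headA w hw
    have hzero2 : w ⬝ᵥ (((S * A)ᵀ * (S * A)) *ᵥ w) = 0 := by
      rw [gram_quad, hzero]
      simp
    have hE2 := habsE w
    rw [hsplit w, hzero2, zero_sub, abs_neg,
      abs_of_nonneg (le_trans (mul_nonneg (sq_nonneg _) (dot_nonneg w)) hG)] at hE2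
    have hgt : 0 < sv sA k ^ 2 - ε * sv sA 1 ^ 2 := by nlinarith [sq_nonneg (sv sA (k + 1))]
    have he3 : e * (w ⬝ᵥ w) ≤ (ε * sv sA 1 ^ 2) * (w ⬝ᵥ w) :=
      mul_le_mul_of_nonneg_right he (dot_nonneg w)
    nlinarith [mul_pos hgt hpos]
  · -- subspace distance part
    intro US sS VS hsvd2
    obtain ⟨hUS, hVS, hantiS, hposS, hSAeq⟩ := hsvd2
    have hGS : (S * A)ᵀ * (S * A) = VS * Matrix.diagonal (fun i => sS i ^ 2) * VSᵀ :=
      gram_svd ⟨hUS, hVS, hantiS, hposS, hSAeq⟩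
    have hk1p' : k - 1 < min t d := by omega
    have hsvSk : sv sS k = sS ⟨k - 1, hk1p'⟩ := sv_eq sS k hk1p'
    -- Weyl-type lower bound : sv sS k ^ 2 ≥ sv sA k ^2 - e
    have hWl : sv sA k ^ 2 - e ≤ sv sS k ^ 2 := by
      obtain ⟨w, hw0, hwspan, hwperp⟩ := exists_common_vec (show k - 1 < k by omega)
        (firstCols VA k hkp) (firstCols_orth hVA hkp) (firstCols VS (k - 1) (by omega))
      have hpos : 0 < w ⬝ᵥ w := dot_pos hw0
      have hG := headA w hwspan
      have hT : w ⬝ᵥ (((S * A)ᵀ * (S * A)) *ᵥ w) ≤ sv sS k ^ 2 * (w ⬝ᵥ w) := by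
        rw [hGS]
        apply quad_tail_le hVS (fun i => sS i ^ 2) (sq_nonneg _) ?_ w
          (fc_perp (by omega) hwperp)
        intro i hik
        show sS i ^ 2 ≤ sv sS k ^ 2
        have h1 : sS i ≤ sS ⟨k - 1, hk1p'⟩ := by
          apply hantiS
          simp only [Fin.le_def]
          omega
        have h2 : 0 ≤ sS i := hposS i
        rw [hsvSk]
        nlinarith
      have hE2 := abs_le.mp (habsE w)
      rw [hsplit w] at hE2
      have hcomb : (sv sA k ^ 2 - e) * (w ⬝ᵥ w) ≤ sv sS k ^ 2 * (w ⬝ᵥ w) := by nlinarith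
      exact le_of_mul_le_mul_right hcomb hpos
    -- Weyl-type upper bound : sv sS (k+1) ^ 2 ≤ sv sA (k+1) ^ 2 + e
    have hsvk1A : ∀ i : Fin (min n d), k ≤ (i : ℕ) → sA i ≤ sv sA (k + 1) := by
      intro i hik
      have hklt : k < min n d := lt_of_le_of_lt hik i.isLt
      rw [sv_eq sA (k + 1) (by omega)]
      apply hantiA
      simp only [Fin.le_def]
      omega
    have hWu : sv sS (k + 1) ^ 2 ≤ sv sA (k + 1) ^ 2 + e := by
      by_cases hkp' : k < min t d
      · have hsvSk1 : sv sS (k + 1) = sS ⟨k + 1 - 1, by omega⟩ := sv_eq sS (k + 1) (by omega)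
        obtain ⟨w, hw0, hwspan, hwperp⟩ := exists_common_vec (show k < k + 1 by omega)
          (firstCols VS (k + 1) (by omega)) (firstCols_orth hVS (by omega))
          (firstCols VA k hkp)
        have hpos : 0 < w ⬝ᵥ w := dot_pos hw0
        have hG : w ⬝ᵥ ((Aᵀ * A) *ᵥ w) ≤ sv sA (k + 1) ^ 2 * (w ⬝ᵥ w) := by
          rw [hGA]
          apply quad_tail_le hVA (fun i => sA i ^ 2) (sq_nonneg _) ?_ w
            (fc_perp hkp hwperp)
          intro i hik
          show sA i ^ 2 ≤ sv sA (k + 1) ^ 2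
          have h1 := hsvk1A i hik
          have h2 := hposA i
          nlinarith
        have hT : sv sS (k + 1) ^ 2 * (w ⬝ᵥ w) ≤ w ⬝ᵥ (((S * A)ᵀ * (S * A)) *ᵥ w) := by
          obtain ⟨z, hz, hVz⟩ := fc_span (show k + 1 ≤ min t d by omega) hwspan
          rw [hGS, ← hVz]
          apply quad_head_ge hVS (fun i => sS i ^ 2) ?_ z hz
          intro i hik
          show sv sS (k + 1) ^ 2 ≤ sS i ^ 2
          have h1 : sS ⟨k + 1 - 1, by omega⟩ ≤ sS i := by
            apply hantiS
            simp only [Fin.le_def]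
            omega
          have h2 : 0 ≤ sS i := hposS i
          have h3 : 0 ≤ sS ⟨k + 1 - 1, by omega⟩ := hposS _
          rw [hsvSk1]
          nlinarith
        have hE2 := abs_le.mp (habsE w)
        rw [hsplit w] at hE2
        have hcomb : sv sS (k + 1) ^ 2 * (w ⬝ᵥ w) ≤ (sv sA (k + 1) ^ 2 + e) * (w ⬝ᵥ w) := by
          nlinarith
        exact le_of_mul_le_mul_right hcomb hpos
      · have : sv sS (k + 1) = 0 := sv_eq_zero sS (k + 1) (by omega)
        rw [this]
        have := sq_nonneg (sv sA (k + 1))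
        nlinarith
    -- basic positivity for sS
    have hsvSk_sq_pos : 0 < sv sS k ^ 2 := by nlinarith [sq_nonneg (sv sA (k + 1))]
    have hsvSk_pos : 0 < sv sS k := by
      rcases (lt_or_eq_of_le (by rw [hsvSk]; exact hposS _ : (0:ℝ) ≤ sv sS k)) with h | h
      · exact h
      · exfalso; rw [← h] at hsvSk_sq_pos; simp at hsvSk_sq_pos
    -- projections
    set χA : Fin (min n d) → ℝ := fun i => if (i : ℕ) < k then 1 else 0 with hχA
    set χS : Fin (min t d) → ℝ := fun i => if (i : ℕ) < k then 1 else 0 with hχS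
    set P := VA * Matrix.diagonal χA * VAᵀ with hP
    set Q := VS * Matrix.diagonal χS * VSᵀ with hQ
    have hPproj : projCol (firstCols VA k hkp) = P := by
      rw [projCol_orth (firstCols_orth hVA hkp), firstCols_proj hkp]
    have hQproj : projCol (firstCols VS k hktd) = Q := by
      rw [projCol_orth (firstCols_orth hVS hktd), firstCols_proj hktd]
    have hPP : P * P = P := by
      have hfun : (fun i => χA i * χA i) = χA := by
        funext i; rw [hχA]; by_cases hik : (i : ℕ) < k <;> simp [hik]
      rw [hP, VdV_mul hVA, hfun]
    have hQQ : Q * Q = Q := by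
      have hfun : (fun i => χS i * χS i) = χS := by
        funext i; rw [hχS]; by_cases hik : (i : ℕ) < k <;> simp [hik]
      rw [hQ, VdV_mul hVS, hfun]
    have hPt : Pᵀ = P := VdV_transpose _ _
    have hQt : Qᵀ = Q := VdV_transpose _ _
    -- commutation
    have hGP : (Aᵀ * A) * P = P * (Aᵀ * A) := by
      have hfun : (fun i : Fin (min n d) => sA i ^ 2 * χA i) = fun i => χA i * sA i ^ 2 := by
        funext i; ring
      rw [hGA, hP, VdV_mul hVA, VdV_mul hVA, hfun]
    have hG'Q : ((S * A)ᵀ * (S * A)) * Q = Q * ((S * A)ᵀ * (S * A)) := by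
      have hfun : (fun i : Fin (min t d) => sS i ^ 2 * χS i) = fun i => χS i * sS i ^ 2 := by
        funext i; ring
      rw [hGS, hQ, VdV_mul hVS, VdV_mul hVS, hfun]
    -- partial inverses
    set hAf : Fin (min n d) → ℝ := fun i => if (i : ℕ) < k then (sA i ^ 2)⁻¹ else 0 with hhAf
    set HA := VA * Matrix.diagonal hAf * VAᵀ with hHA
    have hsAk_le : ∀ i : Fin (min n d), (i : ℕ) < k → sv sA k ≤ sA i := by
      intro i hik
      rw [hsvk]
      apply hantiA
      simp only [Fin.le_def]
      omega
    have hGHA : (Aᵀ * A) * HA = P := by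
      have hfun : (fun i : Fin (min n d) => sA i ^ 2 * hAf i) = χA := by
        funext i
        rw [hhAf, hχA]
        by_cases hik : (i : ℕ) < k
        · simp only [hik, if_true]
          have h1 := hsAk_le i hik
          have h2 : 0 < sA i := lt_of_lt_of_le hσk_pos h1
          have h3 : sA i ^ 2 ≠ 0 := by positivity
          exact mul_inv_cancel₀ h3
        · simp [hik]
      rw [hGA, hHA, VdV_mul hVA, hfun, hP]
    have hPHA : P * HA = HA := by
      have hfun : (fun i : Fin (min n d) => χA i * hAf i) = hAf := by
        funext i; rw [hhAf, hχA]; by_cases hik : (i : ℕ) < k <;> simp [hik]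
      rw [hP, hHA, VdV_mul hVA, hfun]
    have hspecHA : spec HA ≤ (sv sA k ^ 2)⁻¹ := by
      rw [hHA]
      apply spec_VdV_le hVA (by positivity)
      intro i
      rw [hhAf]
      by_cases hik : (i : ℕ) < k
      · simp only [hik, if_true]
        rw [abs_of_nonneg (by positivity)]
        apply inv_anti₀ (by positivity)
        have := hsAk_le i hik
        nlinarith
      · simp only [hik, if_false, abs_zero]
        positivity
    set hSf : Fin (min t d) → ℝ := fun i => if (i : ℕ) < k then (sS i ^ 2)⁻¹ else 0 with hhSf
    set HS := VS * Matrix.diagonal hSf * VSᵀ with hHS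
    have hsSk_le : ∀ i : Fin (min t d), (i : ℕ) < k → sv sS k ≤ sS i := by
      intro i hik
      rw [hsvSk]
      apply hantiS
      simp only [Fin.le_def]
      omega
    have hGHS : ((S * A)ᵀ * (S * A)) * HS = Q := by
      have hfun : (fun i : Fin (min t d) => sS i ^ 2 * hSf i) = χS := by
        funext i
        rw [hhSf, hχS]
        by_cases hik : (i : ℕ) < k
        · simp only [hik, if_true]
          have h1 := hsSk_le i hik
          have h2 : 0 < sS i := lt_of_lt_of_le hsvSk_pos h1
          have h3 : sS i ^ 2 ≠ 0 := by positivity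
          exact mul_inv_cancel₀ h3
        · simp [hik]
      rw [hGS, hHS, VdV_mul hVS, hfun, hQ]
    have hQHS : Q * HS = HS := by
      have hfun : (fun i : Fin (min t d) => χS i * hSf i) = hSf := by
        funext i; rw [hhSf, hχS]; by_cases hik : (i : ℕ) < k <;> simp [hik]
      rw [hQ, hHS, VdV_mul hVS, hfun]
    have hspecHS : spec HS ≤ (sv sS k ^ 2)⁻¹ := by
      rw [hHS]
      apply spec_VdV_le hVS (by positivity)
      intro i
      rw [hhSf]
      by_cases hik : (i : ℕ) < k
      · simp only [hik, if_true]
        have h1 := hsSk_le i hik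
        have h2 : 0 < sS i := lt_of_lt_of_le hsvSk_pos h1
        rw [abs_of_nonneg (by positivity)]
        apply inv_anti₀ (by positivity)
        nlinarith
      · simp only [hik, if_false, abs_zero]
        positivity
    -- tails
    have hGhS : spec (((S * A)ᵀ * (S * A)) * (1 - Q)) ≤ sv sS (k + 1) ^ 2 := by
      have hexp : ((S * A)ᵀ * (S * A)) * (1 - Q)
          = VS * Matrix.diagonal (fun i => sS i ^ 2 - sS i ^ 2 * χS i) * VSᵀ := by
        rw [Matrix.mul_sub, Matrix.mul_one, hGS, hQ, VdV_mul hVS, VdV_sub]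
      rw [hexp]
      apply spec_VdV_le hVS (sq_nonneg _)
      intro i
      rw [hχS]
      by_cases hik : (i : ℕ) < k
      · simp only [hik, if_true, mul_one, sub_self, abs_zero]
        positivity
      · simp only [hik, if_false, mul_zero, sub_zero]
        rw [abs_of_nonneg (sq_nonneg _)]
        have h1 : sS i ≤ sv sS (k + 1) := by
          have hklt : k < min t d := lt_of_le_of_lt (le_of_not_gt hik) i.isLt
          rw [sv_eq sS (k + 1) (by omega)]
          apply hantiS
          simp only [Fin.le_def]
          omega
        have h2 := hposS i
        nlinarith
    have hGhA : spec ((Aᵀ * A) * (1 - P)) ≤ sv sA (k + 1) ^ 2 := by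
      have hexp : (Aᵀ * A) * (1 - P)
          = VA * Matrix.diagonal (fun i => sA i ^ 2 - sA i ^ 2 * χA i) * VAᵀ := by
        rw [Matrix.mul_sub, Matrix.mul_one, hGA, hP, VdV_mul hVA, VdV_sub]
      rw [hexp]
      apply spec_VdV_le hVA (sq_nonneg _)
      intro i
      rw [hχA]
      by_cases hik : (i : ℕ) < k
      · simp only [hik, if_true, mul_one, sub_self, abs_zero]
        positivity
      · simp only [hik, if_false, mul_zero, sub_zero]
        rw [abs_of_nonneg (sq_nonneg _)]
        have h1 := hsvk1A i (le_of_not_gt hik)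
        have h2 := hposA i
        nlinarith
    -- projections have norm ≤ 1
    have hspec1Q : spec (1 - Q) ≤ 1 := by
      apply spec_proj_le_one
      · rw [Matrix.transpose_sub, Matrix.transpose_one, hQt]
      · simp only [Matrix.mul_sub, Matrix.sub_mul, Matrix.mul_one, Matrix.one_mul, hQQ]
        abel
    have hspec1P : spec (1 - P) ≤ 1 := by
      apply spec_proj_le_one
      · rw [Matrix.transpose_sub, Matrix.transpose_one, hPt]
      · simp only [Matrix.mul_sub, Matrix.sub_mul, Matrix.mul_one, Matrix.one_mul, hPP]
        abel
    -- the two sin-theta bounds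
    set D := sv sA k ^ 2 - sv sA (k + 1) ^ 2 - ε * sv sA 1 ^ 2 with hD
    have hD_pos : 0 < D := by rw [hD]; linarith
    have hτ1 : spec ((1 - Q) * P) ≤ ε * sv sA 1 ^ 2 / D := by
      have hkey := key_identity P Q (Aᵀ * A) ((S * A)ᵀ * (S * A)) HA hQQ hG'Q hPHA hGHA
      have hbd := spec_identity_bound (((S * A)ᵀ * (S * A)) * (1 - Q)) ((1 - Q) * P) HA
        (1 - Q) ((S * A)ᵀ * (S * A) - Aᵀ * A) hkey hGhS hspec1Q (le_refl e) hspecHA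
        (sq_nonneg _) he0 (by positivity)
      have hμa : sv sS (k + 1) ^ 2 < sv sA k ^ 2 := by nlinarith
      have hsol := norm_solve (spec_nonneg _) he0 (sq_nonneg _)
        (by positivity : (0:ℝ) ≤ (sv sA k ^ 2)⁻¹)
        (by rw [inv_mul_cancel₀ (by positivity : sv sA k ^ 2 ≠ 0)])
        (by positivity : (0:ℝ) < sv sA k ^ 2) hμa hbd
      calc spec ((1 - Q) * P) ≤ e / (sv sA k ^ 2 - sv sS (k + 1) ^ 2) := hsol
        _ ≤ ε * sv sA 1 ^ 2 / D := by
            apply div_le_div₀ (by positivity) he hD_pos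
            rw [hD]; linarith
    have hτ2 : spec ((1 - P) * Q) ≤ ε * sv sA 1 ^ 2 / D := by
      have hkey := key_identity Q P ((S * A)ᵀ * (S * A)) (Aᵀ * A) HS hPP hGP hQHS hGHS
      have hE2 : spec (Aᵀ * A - (S * A)ᵀ * (S * A)) ≤ e := by
        have : Aᵀ * A - (S * A)ᵀ * (S * A) = -((S * A)ᵀ * (S * A) - Aᵀ * A) := by abel
        rw [this, spec_neg]
      have hbd := spec_identity_bound ((Aᵀ * A) * (1 - P)) ((1 - P) * Q) HS
        (1 - P) (Aᵀ * A - (S * A)ᵀ * (S * A)) hkey hGhA hspec1P hE2 hspecHS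
        (sq_nonneg _) he0 (by positivity)
      have hμa : sv sA (k + 1) ^ 2 < sv sS k ^ 2 := by nlinarith
      have hsol := norm_solve (spec_nonneg _) he0 (sq_nonneg _)
        (by positivity : (0:ℝ) ≤ (sv sS k ^ 2)⁻¹)
        (by rw [inv_mul_cancel₀ (by positivity : sv sS k ^ 2 ≠ 0)])
        hsvSk_sq_pos hμa hbd
      calc spec ((1 - P) * Q) ≤ e / (sv sS k ^ 2 - sv sA (k + 1) ^ 2) := hsol
        _ ≤ ε * sv sA 1 ^ 2 / D := by
            apply div_le_div₀ (by positivity) he hD_pos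
            rw [hD]; linarith
    have hτ2' : spec (Q * (1 - P)) ≤ ε * sv sA 1 ^ 2 / D := by
      have : Q * (1 - P) = ((1 - P) * Q)ᵀ := by
        rw [Matrix.transpose_mul, hQt, Matrix.transpose_sub, Matrix.transpose_one, hPt]
      rw [this, spec_transpose]
      exact hτ2
    -- conclude
    have hfinal : spec (Q - P) ≤ ε * sv sA 1 ^ 2 / D :=
      spec_proj_diff_le P Q hPt hPP hQt hQQ (by positivity) hτ1 hτ2'
    have hden : (sv sA k ^ 2 - sv sA (k + 1) ^ 2) / sv sA 1 ^ 2 - ε = D / sv sA 1 ^ 2 := by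
      rw [hD]
      have hne : sv sA 1 ^ 2 ≠ 0 := by positivity
      field_simp
    rw [d2, hQproj, hPproj, hden, div_div_eq_mul_div]
    exact hfinal
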